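/- arXiv:1602.03552 — 3 statements merged into one kernel-verified Lean document; each statement's English description precedes it below -/
import Mathlib

section
/- Let l : ℝ → ℝ be differentiable with derivative l' that is c-Lipschitz. Define R(w) = (1/N) Σ_{i=1}^N [α_i l(⟨w,x_i⟩) + (1−α_i) l(−⟨w,x_i⟩)] + (λ/2)‖w‖², where α_i ∈ [0,1], ‖x_i‖ ≤ 1, and λ > 0. Then ∇R is (c+λ)-Lipschitz, i.e., ‖∇R(v) − ∇R(u)‖ ≤ (c+λ)‖v−u‖ for all u, v ∈ ℝ^d. -/
open scoped InnerProductSpace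
open Finset

noncomputable abbrev Fsp (d : ℕ) := EuclideanSpace ℝ (Fin d)

lemma grad_eq {d N : ℕ} (l : ℝ → ℝ) (hl : Differentiable ℝ l) (lam : ℝ)
    (x : Fin N → Fsp d) (α : Fin N → ℝ) (z : Fsp d) :
    gradient (fun z : Fsp d =>
        (1 / N : ℝ) * ∑ i, (α i * l ⟪z, x i⟫_ℝ + (1 - α i) * l (-⟪z, x i⟫_ℝ)) +
          lam / 2 * ‖z‖ ^ 2) z =
      (1 / N : ℝ) • (∑ i, (α i * deriv l ⟪z, x i⟫_ℝ - (1 - α i) * deriv l (-⟪z, x i⟫_ℝ)) • x i)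
        + lam • z := by
  apply HasGradientAt.gradient
  rw [hasGradientAt_iff_hasFDerivAt]
  have hinner : ∀ i : Fin N, HasFDerivAt (fun z : Fsp d => ⟪z, x i⟫_ℝ) (innerSL ℝ (x i)) z := by
    intro i
    have : (fun z : Fsp d => ⟪z, x i⟫_ℝ) = fun z => innerSL ℝ (x i) z := by
      funext w; exact (real_inner_comm _ _)
    rw [this]; exact (innerSL ℝ (x i)).hasFDerivAt
  have hterm : ∀ i : Fin N, HasFDerivAt (fun z : Fsp d => α i * l ⟪z, x i⟫_ℝ + (1 - α i) * l (-⟪z, x i⟫_ℝ))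
      ((α i * deriv l ⟪z, x i⟫_ℝ) • innerSL ℝ (x i)
        + ((1 - α i) * deriv l (-⟪z, x i⟫_ℝ)) • (-innerSL ℝ (x i))) z := by
    intro i
    have h1 : HasFDerivAt (fun z : Fsp d => l ⟪z, x i⟫_ℝ)
        (deriv l ⟪z, x i⟫_ℝ • innerSL ℝ (x i)) z :=
      ((hl _).hasDerivAt).comp_hasFDerivAt z (hinner i)
    have h2 : HasFDerivAt (fun z : Fsp d => l (-⟪z, x i⟫_ℝ))
        (deriv l (-⟪z, x i⟫_ℝ) • (-innerSL ℝ (x i))) z :=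
      ((hl _).hasDerivAt).comp_hasFDerivAt z (hinner i).neg
    have := (h1.const_mul (α i)).add (h2.const_mul (1 - α i))
    refine this.congr_fderiv ?_
    ext w
    simp [mul_smul]
  have hsum := HasFDerivAt.fun_sum (u := Finset.univ) (fun i _ => hterm i)
  have hsum2 := hsum.const_mul ((1 / N : ℝ))
  have hnorm : HasFDerivAt (fun z : Fsp d => lam / 2 * ‖z‖ ^ 2)
      ((lam / 2) • ((fderivInnerCLM ℝ (z, z)).comp ((ContinuousLinearMap.id ℝ (Fsp d)).prod (ContinuousLinearMap.id ℝ (Fsp d))))) z := by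
    have : (fun z : Fsp d => lam / 2 * ‖z‖ ^ 2) = fun z : Fsp d => lam / 2 * ⟪z, z⟫_ℝ := by
      funext w; rw [real_inner_self_eq_norm_sq]
    rw [this]
    exact ((hasFDerivAt_id z).inner ℝ (hasFDerivAt_id z)).const_mul (lam / 2)
  have htot := hsum2.add hnorm
  refine htot.congr_fderiv ?_
  apply ContinuousLinearMap.ext
  intro w
  simp only [InnerProductSpace.toDual_apply_apply, ContinuousLinearMap.add_apply,
    ContinuousLinearMap.smul_apply, ContinuousLinearMap.coe_sum', Finset.sum_apply,
    ContinuousLinearMap.neg_apply, innerSL_apply_apply, ContinuousLinearMap.comp_apply,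
    ContinuousLinearMap.prod_apply, ContinuousLinearMap.id_apply, fderivInnerCLM_apply,
    inner_add_left, real_inner_smul_left, sum_inner, smul_eq_mul]
  rw [real_inner_comm z w]
  ring_nf
  congr 1
  · rw [Finset.mul_sum, Finset.mul_sum]
    apply Finset.sum_congr rfl
    intro i _
    rw [real_inner_comm]
    ring


theorem stmt4 {d N : ℕ} (hN : 0 < N) (l : ℝ → ℝ) (hl : Differentiable ℝ l)
    (c lam : ℝ) (hc : 0 ≤ c) (hlam : 0 < lam)
    (hlip : ∀ s t : ℝ, |deriv l s - deriv l t| ≤ c * |s - t|)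
    (x : Fin N → EuclideanSpace ℝ (Fin d)) (hx : ∀ i, ‖x i‖ ≤ 1)
    (α : Fin N → ℝ) (hα : ∀ i, α i ∈ Set.Icc (0 : ℝ) 1)
    (u v : EuclideanSpace ℝ (Fin d)) :
    ‖gradient (fun z : EuclideanSpace ℝ (Fin d) =>
        (1 / N : ℝ) * ∑ i, (α i * l ⟪z, x i⟫_ℝ + (1 - α i) * l (-⟪z, x i⟫_ℝ)) +
          lam / 2 * ‖z‖ ^ 2) v -
      gradient (fun z : EuclideanSpace ℝ (Fin d) =>
        (1 / N : ℝ) * ∑ i, (α i * l ⟪z, x i⟫_ℝ + (1 - α i) * l (-⟪z, x i⟫_ℝ)) +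
          lam / 2 * ‖z‖ ^ 2) u‖ ≤ (c + lam) * ‖v - u‖ := by
  rw [grad_eq l hl lam x α v, grad_eq l hl lam x α u]
  set Δ : Fin N → ℝ := fun i =>
    (α i * deriv l ⟪v, x i⟫_ℝ - (1 - α i) * deriv l (-⟪v, x i⟫_ℝ)) -
    (α i * deriv l ⟪u, x i⟫_ℝ - (1 - α i) * deriv l (-⟪u, x i⟫_ℝ)) with hΔ
  have hre : (1 / N : ℝ) • (∑ i, (α i * deriv l ⟪v, x i⟫_ℝ - (1 - α i) * deriv l (-⟪v, x i⟫_ℝ)) • x i) + lam • v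
      - ((1 / N : ℝ) • (∑ i, (α i * deriv l ⟪u, x i⟫_ℝ - (1 - α i) * deriv l (-⟪u, x i⟫_ℝ)) • x i) + lam • u)
      = (1 / N : ℝ) • (∑ i, Δ i • x i) + lam • (v - u) := by
    have hs : ∑ i, Δ i • x i
        = (∑ i, (α i * deriv l ⟪v, x i⟫_ℝ - (1 - α i) * deriv l (-⟪v, x i⟫_ℝ)) • x i)
          - (∑ i, (α i * deriv l ⟪u, x i⟫_ℝ - (1 - α i) * deriv l (-⟪u, x i⟫_ℝ)) • x i) := by
      rw [← Finset.sum_sub_distrib]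
      exact Finset.sum_congr rfl fun i _ => by rw [hΔ, sub_smul]
    rw [hs, smul_sub, smul_sub]
    abel
  rw [hre]
  have hterm : ∀ i : Fin N, ‖Δ i • x i‖ ≤ c * ‖v - u‖ := by
    intro i
    obtain ⟨h0, h1⟩ := hα i
    have hA : |deriv l ⟪v, x i⟫_ℝ - deriv l ⟪u, x i⟫_ℝ| ≤ c * |⟪v - u, x i⟫_ℝ| := by
      have := hlip ⟪v, x i⟫_ℝ ⟪u, x i⟫_ℝ
      rwa [← inner_sub_left] at this
    have hB : |deriv l (-⟪v, x i⟫_ℝ) - deriv l (-⟪u, x i⟫_ℝ)| ≤ c * |⟪v - u, x i⟫_ℝ| := by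
      have := hlip (-⟪v, x i⟫_ℝ) (-⟪u, x i⟫_ℝ)
      have heq : |-⟪v, x i⟫_ℝ - -⟪u, x i⟫_ℝ| = |⟪v - u, x i⟫_ℝ| := by
        rw [inner_sub_left]
        rw [show -⟪v, x i⟫_ℝ - -⟪u, x i⟫_ℝ = -(⟪v, x i⟫_ℝ - ⟪u, x i⟫_ℝ) by ring, abs_neg]
      rwa [heq] at this
    have hΔi : |Δ i| ≤ c * |⟪v - u, x i⟫_ℝ| := by
      have : Δ i = α i * (deriv l ⟪v, x i⟫_ℝ - deriv l ⟪u, x i⟫_ℝ)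
          - (1 - α i) * (deriv l (-⟪v, x i⟫_ℝ) - deriv l (-⟪u, x i⟫_ℝ)) := by
        rw [hΔ]; ring
      rw [this]
      calc |α i * (deriv l ⟪v, x i⟫_ℝ - deriv l ⟪u, x i⟫_ℝ)
          - (1 - α i) * (deriv l (-⟪v, x i⟫_ℝ) - deriv l (-⟪u, x i⟫_ℝ))|
          ≤ |α i * (deriv l ⟪v, x i⟫_ℝ - deriv l ⟪u, x i⟫_ℝ)|
            + |(1 - α i) * (deriv l (-⟪v, x i⟫_ℝ) - deriv l (-⟪u, x i⟫_ℝ))| := abs_sub _ _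
        _ = α i * |deriv l ⟪v, x i⟫_ℝ - deriv l ⟪u, x i⟫_ℝ|
            + (1 - α i) * |deriv l (-⟪v, x i⟫_ℝ) - deriv l (-⟪u, x i⟫_ℝ)| := by
            rw [abs_mul, abs_mul, abs_of_nonneg h0, abs_of_nonneg (show (0:ℝ) ≤ 1 - α i by linarith)]
        _ ≤ α i * (c * |⟪v - u, x i⟫_ℝ|) + (1 - α i) * (c * |⟪v - u, x i⟫_ℝ|) :=
            add_le_add (mul_le_mul_of_nonneg_left hA h0)
              (mul_le_mul_of_nonneg_left hB (by linarith))
        _ = c * |⟪v - u, x i⟫_ℝ| := by ring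
    have hCS : |⟪v - u, x i⟫_ℝ| ≤ ‖v - u‖ * ‖x i‖ := abs_real_inner_le_norm _ _
    have hxnn : (0:ℝ) ≤ ‖x i‖ := norm_nonneg _
    calc ‖Δ i • x i‖ = |Δ i| * ‖x i‖ := by rw [norm_smul, Real.norm_eq_abs]
      _ ≤ (c * (‖v - u‖ * ‖x i‖)) * ‖x i‖ := by
          apply mul_le_mul_of_nonneg_right _ hxnn
          exact le_trans hΔi (by gcongr)
      _ = c * ‖v - u‖ * (‖x i‖ * ‖x i‖) := by ring
      _ ≤ c * ‖v - u‖ * 1 := by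
          apply mul_le_mul_of_nonneg_left _ (by positivity)
          nlinarith [hx i]
      _ = c * ‖v - u‖ := by ring
  have hsumb : ‖∑ i, Δ i • x i‖ ≤ (N : ℝ) * (c * ‖v - u‖) := by
    calc ‖∑ i, Δ i • x i‖ ≤ ∑ i, ‖Δ i • x i‖ := norm_sum_le _ _
      _ ≤ ∑ _i : Fin N, c * ‖v - u‖ := Finset.sum_le_sum (fun i _ => hterm i)
      _ = (N : ℝ) * (c * ‖v - u‖) := by simp [Finset.sum_const, mul_comm]
  have hNpos : (0:ℝ) < N := by exact_mod_cast hN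
  calc ‖(1 / N : ℝ) • (∑ i, Δ i • x i) + lam • (v - u)‖
      ≤ ‖(1 / N : ℝ) • (∑ i, Δ i • x i)‖ + ‖lam • (v - u)‖ := norm_add_le _ _
    _ = (1 / N : ℝ) * ‖∑ i, Δ i • x i‖ + lam * ‖v - u‖ := by
        rw [norm_smul, norm_smul, Real.norm_eq_abs, Real.norm_eq_abs,
          abs_of_nonneg (by positivity), abs_of_nonneg hlam.le]
    _ ≤ (1 / N : ℝ) * ((N : ℝ) * (c * ‖v - u‖)) + lam * ‖v - u‖ := by
        gcongr
    _ = (c + lam) * ‖v - u‖ := by field_simp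
end

section
/- Let X be a real random variable with Gamma distribution of integer shape parameter k ≥ 1 and scale parameter θ > 0. Then for every δ ∈ (0,1), P(X > kθ log(k/δ)) ≤ δ. -/
open MeasureTheory ProbabilityTheory Finset Nat

lemma aux_pow_succ_le (n : ℕ) : ((n : ℝ) + 1) ^ n ≤ n ! * Real.exp n := by
  induction n with
  | zero => simp
  | succ n ih =>
    push_cast
    have hb : (0:ℝ) < (n:ℝ) + 1 := by positivity
    have h3 : (1 + 1/((n:ℝ)+1)) ^ (n+1) ≤ Real.exp 1 := by
      calc (1 + 1/((n:ℝ)+1)) ^ (n+1) ≤ (Real.exp (1/((n:ℝ)+1)))^(n+1) := by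
            apply pow_le_pow_left₀ (by positivity) (by linarith [Real.add_one_le_exp (1/((n:ℝ)+1))])
        _ = Real.exp ((n+1 : ℕ) * (1/((n:ℝ)+1))) := by rw [Real.exp_nat_mul]
        _ = Real.exp 1 := by push_cast; rw [mul_one_div, div_self hb.ne']
    have h1 : ((n:ℝ) + 1 + 1) ^ (n+1) ≤ Real.exp 1 * ((n:ℝ)+1)^(n+1) := by
      have h2 : ((n:ℝ) + 1 + 1) = ((n:ℝ)+1) * (1 + 1/((n:ℝ)+1)) := by field_simp
      rw [h2, mul_pow]
      calc ((n:ℝ)+1)^(n+1) * (1 + 1/((n:ℝ)+1))^(n+1)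
          ≤ ((n:ℝ)+1)^(n+1) * Real.exp 1 := by
            apply mul_le_mul_of_nonneg_left h3 (by positivity)
        _ = Real.exp 1 * ((n:ℝ)+1)^(n+1) := by ring
    calc ((n:ℝ) + 1 + 1) ^ (n+1) ≤ Real.exp 1 * ((n:ℝ)+1)^(n+1) := h1
      _ = Real.exp 1 * (((n:ℝ)+1) * ((n:ℝ)+1)^n) := by ring
      _ ≤ Real.exp 1 * (((n:ℝ)+1) * (n ! * Real.exp n)) := by
          apply mul_le_mul_of_nonneg_left (mul_le_mul_of_nonneg_left ih (by positivity))
            (Real.exp_pos 1).le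
      _ = (n+1) ! * Real.exp (n+1) := by
          rw [Nat.factorial_succ, Real.exp_add]; push_cast; ring

lemma key_term (k i : ℕ) (hik : i + 1 ≤ k) (t : ℝ) (ht : 0 ≤ t) :
    ((k:ℝ) * t) ^ i * Real.exp (-(((k:ℝ) - 1) * t)) ≤ i ! := by
  rcases Nat.eq_zero_or_pos i with rfl | hi
  · have h1k : (1:ℝ) ≤ (k:ℝ) := Nat.one_le_cast.mpr hik
    simp only [pow_zero, one_mul, Nat.factorial_zero, Nat.cast_one]
    exact Real.exp_le_one_iff.mpr (by nlinarith)
  · have hki : (i:ℝ) + 1 ≤ k := by exact_mod_cast hik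
    have hi' : (0:ℝ) < i := by exact_mod_cast hi
    set x : ℝ := ((k:ℝ) - 1) * t with hx
    have hx0 : 0 ≤ x := mul_nonneg (by linarith) ht
    have hstep1 : (k:ℝ) * t ≤ (((i:ℝ)+1)/i) * x := by
      rw [hx, div_mul_eq_mul_div, le_div_iff₀ hi']
      nlinarith
    have hstep2 : x ^ i ≤ (i:ℝ)^i * Real.exp (x - i) := by
      have h1 : x / i ≤ Real.exp (x/i - 1) := by
        linarith [Real.add_one_le_exp (x/i - 1)]
      have h2 : (x/i)^i ≤ (Real.exp (x/i - 1))^i :=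
        pow_le_pow_left₀ (by positivity) h1 i
      have h3 : (Real.exp (x/i - 1))^i = Real.exp (x - i) := by
        rw [← Real.exp_nat_mul]
        congr 1
        field_simp
      calc x ^ i = (x/i)^i * (i:ℝ)^i := by
            rw [div_pow, div_mul_eq_mul_div, mul_div_assoc, div_self (by positivity), mul_one]
        _ ≤ Real.exp (x - i) * (i:ℝ)^i := by
            apply mul_le_mul_of_nonneg_right (h2.trans_eq h3) (by positivity)
        _ = (i:ℝ)^i * Real.exp (x - i) := by ring
    calc ((k:ℝ) * t) ^ i * Real.exp (-x)
        ≤ ((((i:ℝ)+1)/i) * x) ^ i * Real.exp (-x) := by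
          apply mul_le_mul_of_nonneg_right
            (pow_le_pow_left₀ (by positivity) hstep1 i) (Real.exp_pos _).le
      _ = (((i:ℝ)+1)/i)^i * (x ^ i * Real.exp (-x)) := by rw [mul_pow]; ring
      _ ≤ (((i:ℝ)+1)/i)^i * ((i:ℝ)^i * Real.exp (x - i) * Real.exp (-x)) := by
          apply mul_le_mul_of_nonneg_left
            (mul_le_mul_of_nonneg_right hstep2 (Real.exp_pos _).le) (by positivity)
      _ = ((i:ℝ)+1)^i * Real.exp (-(i:ℝ)) := by
          have he : Real.exp (x - (i:ℝ)) * Real.exp (-x) = Real.exp (-(i:ℝ)) := by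
            rw [← Real.exp_add]; congr 1; ring
          rw [mul_assoc ((i:ℝ)^i), he, div_pow]
          field_simp
      _ ≤ (i ! * Real.exp i) * Real.exp (-(i:ℝ)) := by
          apply mul_le_mul_of_nonneg_right (aux_pow_succ_le i) (Real.exp_pos _).le
      _ = i ! := by rw [mul_assoc, ← Real.exp_add, add_neg_cancel, Real.exp_zero, mul_one]


lemma tail_sum_le (k : ℕ) (hk : 1 ≤ k) (t : ℝ) (ht : 0 ≤ t) :
    Real.exp (-((k:ℝ) * t)) * ∑ i ∈ Finset.range k, ((k:ℝ) * t) ^ i / i ! ≤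
      k * Real.exp (-t) := by
  have hsplit : Real.exp (-((k:ℝ) * t)) = Real.exp (-(((k:ℝ)-1) * t)) * Real.exp (-t) := by
    rw [← Real.exp_add]; congr 1; ring
  rw [Finset.mul_sum]
  calc ∑ i ∈ Finset.range k, Real.exp (-((k:ℝ)*t)) * (((k:ℝ) * t) ^ i / i !)
      ≤ ∑ _i ∈ Finset.range k, Real.exp (-t) := by
        apply Finset.sum_le_sum
        intro i hi
        rw [hsplit]
        have hkey := key_term k i (Finset.mem_range.mp hi) t ht
        have hfac : (0:ℝ) < i ! := by exact_mod_cast Nat.factorial_pos i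
        have h1 : ((k:ℝ) * t) ^ i * Real.exp (-(((k:ℝ)-1) * t)) / i ! ≤ 1 :=
          (div_le_one hfac).mpr hkey
        calc Real.exp (-(((k:ℝ)-1)*t)) * Real.exp (-t) * (((k:ℝ) * t) ^ i / i !)
            = (((k:ℝ) * t) ^ i * Real.exp (-(((k:ℝ)-1) * t)) / i !) * Real.exp (-t) := by
              ring
          _ ≤ 1 * Real.exp (-t) :=
              mul_le_mul_of_nonneg_right h1 (Real.exp_pos _).le
          _ = Real.exp (-t) := one_mul _
    _ = k * Real.exp (-t) := by
        rw [Finset.sum_const, Finset.card_range, nsmul_eq_mul]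

lemma hasDerivAt_G (m : ℕ) (u : ℝ) :
    HasDerivAt (fun u : ℝ => -(Real.exp (-u) * ∑ i ∈ Finset.range (m+1), u ^ i / i !))
      (Real.exp (-u) * u ^ m / m !) u := by
  have he : HasDerivAt (fun u : ℝ => Real.exp (-u)) (-Real.exp (-u)) u := by
    simpa [Function.comp_def] using (Real.hasDerivAt_exp (-u)).comp u (hasDerivAt_neg u)
  have hS : HasDerivAt (fun u : ℝ => ∑ i ∈ Finset.range (m+1), u ^ i / i !)
      (∑ i ∈ Finset.range m, u ^ i / i !) u := by
    have h := HasDerivAt.fun_sum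
      (fun i (_ : i ∈ Finset.range (m+1)) => (hasDerivAt_pow i u).div_const (i ! : ℝ))
    refine h.congr_deriv (Eq.symm ?_)
    rw [Finset.sum_range_succ' (fun i => ((i:ℝ) * u ^ (i-1)) / i !)]
    simp only [Nat.cast_zero, zero_mul, Nat.factorial_zero, Nat.cast_one, zero_div, add_zero,
      Nat.add_sub_cancel]
    apply Finset.sum_congr rfl
    intro i _
    rw [Nat.factorial_succ]
    push_cast
    have hfac : ((i:ℝ) + 1) * i ! ≠ 0 := by positivity
    field_simp
  have := (he.mul hS).neg
  refine this.congr_deriv (Eq.symm ?_)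
  rw [Finset.sum_range_succ]
  ring


theorem stmt7 {Ω : Type*} [MeasurableSpace Ω] (μ : Measure Ω) [IsProbabilityMeasure μ]
    (k : ℕ) (hk : 1 ≤ k) (θ : ℝ) (hθ : 0 < θ)
    (X : Ω → ℝ) (hX : Measurable X)
    (hlaw : μ.map X = gammaMeasure k (1 / θ))
    (δ : ℝ) (hδ : δ ∈ Set.Ioo (0 : ℝ) 1) :
    μ {ω | k * θ * Real.log (k / δ) < X ω} ≤ ENNReal.ofReal δ := by
  obtain ⟨hδ0, hδ1⟩ := hδ
  obtain ⟨m, rfl⟩ : ∃ m, k = m + 1 := ⟨k - 1, (Nat.succ_pred_eq_of_pos hk).symm⟩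
  set K : ℝ := ((m + 1 : ℕ) : ℝ) with hK
  have hK1 : (1:ℝ) ≤ K := by rw [hK]; exact_mod_cast Nat.one_le_iff_ne_zero.mpr (Nat.succ_ne_zero m)
  set t : ℝ := Real.log (K / δ) with htdef
  have ht : 0 < t := Real.log_pos (by rw [lt_div_iff₀ hδ0]; nlinarith)
  set r : ℝ := 1 / θ with hr'
  have hr : 0 < r := by positivity
  set a : ℝ := K * θ * t with hadef
  have ha : 0 < a := by positivity
  have hra : r * a = K * t := by rw [hr', hadef]; field_simp
  set F : ℝ → ℝ := fun x => -(Real.exp (-(r*x)) * ∑ i ∈ Finset.range (m+1), (r*x)^i / i !)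
    with hF
  set D : ℝ → ℝ := fun x => r * (Real.exp (-(r*x)) * (r*x)^m / m !) with hD
  have hderiv : ∀ x : ℝ, HasDerivAt F (D x) x := by
    intro x
    have h1 : HasDerivAt (fun x : ℝ => r * x) r x := by
      simpa using (hasDerivAt_id x).const_mul r
    have h2 := (hasDerivAt_G m (r * x)).comp x h1
    simp only [hF, hD, Function.comp] at h2 ⊢
    refine h2.congr_deriv (Eq.symm ?_)
    ring
  have htend : Filter.Tendsto F Filter.atTop (nhds 0) := by
    have hterm : ∀ i : ℕ, Filter.Tendsto (fun u : ℝ => Real.exp (-u) * u ^ i / i !)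
        Filter.atTop (nhds 0) := by
      intro i
      have h := (Real.tendsto_pow_mul_exp_neg_atTop_nhds_zero i).div_const (i ! : ℝ)
      simp only [zero_div] at h
      exact h.congr (fun u => by ring)
    have hsum := tendsto_finset_sum (Finset.range (m+1))
      (fun i (_ : i ∈ Finset.range (m+1)) => hterm i)
    simp only [Finset.sum_const_zero] at hsum
    have hG : Filter.Tendsto
        (fun u : ℝ => -(Real.exp (-u) * ∑ i ∈ Finset.range (m+1), u ^ i / i !))
        Filter.atTop (nhds 0) := by
      have h2 := hsum.neg
      simp only [neg_zero] at h2
      exact h2.congr (fun u => by rw [Finset.mul_sum]; simp [mul_div_assoc])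
    exact hG.comp (Filter.tendsto_id.const_mul_atTop hr)
  have hpos : ∀ x ∈ Set.Ioi a, 0 ≤ D x := by
    intro x hx
    have hx0 : 0 < x := lt_trans ha hx
    rw [hD]
    positivity
  have hint : ∫ x in Set.Ioi a, D x = 0 - F a :=
    MeasureTheory.integral_Ioi_of_hasDerivAt_of_nonneg' (fun x _ => hderiv x) hpos htend
  have hintOn : IntegrableOn D (Set.Ioi a) :=
    MeasureTheory.integrableOn_Ioi_deriv_of_nonneg' (fun x _ => hderiv x) hpos htend
  have hpdf : ∀ x : ℝ, x ∈ Set.Ioi a → gammaPDF K r x = ENNReal.ofReal (D x) := by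
    intro x hx
    have hx0 : 0 < x := lt_trans ha hx
    rw [gammaPDF_of_nonneg hx0.le]
    congr 1
    rw [show K - 1 = ((m : ℕ) : ℝ) by rw [hK]; push_cast; ring]
    rw [Real.rpow_natCast x m, hK, Real.rpow_natCast r (m+1)]
    rw [show ((m + 1 : ℕ) : ℝ) = (m : ℝ) + 1 by push_cast; ring]
    rw [Real.Gamma_nat_eq_factorial m, hD]
    have hfac : ((m ! : ℕ) : ℝ) ≠ 0 := by positivity
    field_simp
    ring
  calc μ {ω | K * θ * t < X ω}
      = (μ.map X) (Set.Ioi a) := by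
        rw [MeasureTheory.Measure.map_apply hX measurableSet_Ioi]
        rfl
    _ = gammaMeasure K r (Set.Ioi a) := by rw [hlaw]
    _ = ∫⁻ x in Set.Ioi a, gammaPDF K r x := by
        rw [gammaMeasure, MeasureTheory.withDensity_apply _ measurableSet_Ioi]
    _ = ∫⁻ x in Set.Ioi a, ENNReal.ofReal (D x) := by
        apply setLIntegral_congr_fun measurableSet_Ioi
        exact fun x hx => hpdf x hx
    _ = ENNReal.ofReal (∫ x in Set.Ioi a, D x) := by
        refine (MeasureTheory.ofReal_integral_eq_lintegral_ofReal hintOn ?_).symm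
        filter_upwards [ae_restrict_mem measurableSet_Ioi] with x hx
        exact hpos x hx
    _ = ENNReal.ofReal (0 - F a) := by rw [hint]
    _ ≤ ENNReal.ofReal δ := by
        apply ENNReal.ofReal_le_ofReal
        have h0 : 0 - F a = Real.exp (-(r*a)) * ∑ i ∈ Finset.range (m+1), (r*a)^i / i ! := by
          rw [hF]; ring
        rw [h0, hra]
        have hts := tail_sum_le (m+1) (Nat.le_add_left 1 m) t ht.le
        have hexp : Real.exp (-t) = δ / K := by
          rw [htdef, Real.exp_neg, Real.exp_log (by positivity), inv_div]
        calc Real.exp (-(K * t)) * ∑ i ∈ Finset.range (m+1), (K * t)^i / i !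
            ≤ ((m+1 : ℕ) : ℝ) * Real.exp (-t) := hts
          _ = δ := by rw [hexp, ← hK]; field_simp
end

section
/- Let λ > 0 and let F, G : ℝ^d → ℝ be differentiable, with F λ-strongly convex and G λ-strongly convex, and assume g = F − G is differentiable with ‖∇g(w)‖ ≤ B for all w. If w_F minimizes F and w_G minimizes G, then ‖w_F − w_G‖ ≤ B/λ. -/
open Set

local notation "⟪" x ", " y "⟫" => @inner ℝ _ _ x y

/-- First-order gradient monotonicity for a strongly convex differentiable function. -/
lemma strong_convex_grad_mono {E : Type*} [NormedAddCommGroup E] [InnerProductSpace ℝ E]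
    {lam : ℝ} {F : E → ℝ} (hFc : StrongConvexOn Set.univ lam F)
    (hFd : Differentiable ℝ F) (x y : E) :
    lam * ‖y - x‖ ^ 2 ≤ fderiv ℝ F y (y - x) - fderiv ℝ F x (y - x) := by
  set v := y - x with hv
  have hφc : ConvexOn ℝ Set.univ (fun w => F w - lam / 2 * ‖w‖ ^ 2) :=
    strongConvexOn_iff_convex.mp hFc
  -- restrict to the line t ↦ t • v + x
  set ψ : ℝ → ℝ := fun t => F (t • v + x) - lam / 2 * ‖t • v + x‖ ^ 2 with hψ
  have hψc : ConvexOn ℝ Set.univ ψ := by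
    have h := hφc.comp_affineMap (AffineMap.lineMap x y)
    have heq : ((fun w => F w - lam / 2 * ‖w‖ ^ 2) ∘ (AffineMap.lineMap x y)) = ψ := by
      funext t
      simp [ψ, AffineMap.lineMap_apply, hv]
    rw [heq, Set.preimage_univ] at h
    exact h
  have hline : ∀ t : ℝ, HasDerivAt (fun t : ℝ => t • v + x) v t := by
    intro t
    simpa using ((hasDerivAt_id t).smul_const v).add_const x
  have hψ' : ∀ t : ℝ, HasDerivAt ψ
      (fderiv ℝ F (t • v + x) v - lam * ⟪t • v + x, v⟫) t := by
    intro t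
    have hF' : HasDerivAt (fun t : ℝ => F (t • v + x)) (fderiv ℝ F (t • v + x) v) t :=
      (hFd (t • v + x)).hasFDerivAt.comp_hasDerivAt t (hline t)
    have hn : HasDerivAt (fun t : ℝ => ‖t • v + x‖ ^ 2) (2 * ⟪t • v + x, v⟫) t := by
      have := HasDerivAt.inner ℝ (hline t) (hline t)
      have heq : (fun t : ℝ => ⟪t • v + x, t • v + x⟫) = fun t : ℝ => ‖t • v + x‖ ^ 2 := by
        funext s; rw [real_inner_self_eq_norm_sq]
      rw [heq] at this
      refine this.congr_deriv ?_
      rw [real_inner_comm (t • v + x) v]; ring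
    have := hF'.sub ((hn.const_mul (lam / 2)))
    refine this.congr_deriv ?_
    ring
  have hle1 : fderiv ℝ F ((0:ℝ) • v + x) v - lam * ⟪(0:ℝ) • v + x, v⟫ ≤ slope ψ 0 1 :=
    hψc.le_slope_of_hasDerivAt (Set.mem_univ 0) (Set.mem_univ 1) one_pos (hψ' 0)
  have hle2 : slope ψ 0 1 ≤ fderiv ℝ F ((1:ℝ) • v + x) v - lam * ⟪(1:ℝ) • v + x, v⟫ :=
    hψc.slope_le_of_hasDerivAt (Set.mem_univ 0) (Set.mem_univ 1) one_pos (hψ' 1)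
  have key := hle1.trans hle2
  have e0 : (0:ℝ) • v + x = x := by simp
  have e1 : (1:ℝ) • v + x = y := by simp [hv]
  rw [e0, e1] at key
  have einner : lam * ⟪y, v⟫ - lam * ⟪x, v⟫ = lam * ‖v‖ ^ 2 := by
    rw [← mul_sub, ← inner_sub_left, ← hv, real_inner_self_eq_norm_sq]
  linarith

theorem stmt16 {d : ℕ} (lam B : ℝ) (hlam : 0 < lam)
    (F G : EuclideanSpace ℝ (Fin d) → ℝ)
    (hF : Differentiable ℝ F) (hG : Differentiable ℝ G)
    (hFc : StrongConvexOn Set.univ lam F) (hGc : StrongConvexOn Set.univ lam G)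
    (hB : ∀ w, ‖gradient (fun u => F u - G u) w‖ ≤ B)
    (wF wG : EuclideanSpace ℝ (Fin d))
    (hwF : ∀ w, F wF ≤ F w) (hwG : ∀ w, G wG ≤ G w) :
    ‖wF - wG‖ ≤ B / lam := by
  set z := wF - wG with hz
  -- gradients vanish at the minimizers
  have hFmin : fderiv ℝ F wF = 0 := by
    have h : IsLocalMin F wF := Filter.Eventually.of_forall hwF
    exact h.fderiv_eq_zero
  have hGmin : fderiv ℝ G wG = 0 := by
    have h : IsLocalMin G wG := Filter.Eventually.of_forall hwG
    exact h.fderiv_eq_zero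
  -- strong monotonicity of ∇F between wG and wF
  have hmono := strong_convex_grad_mono hFc hF wG wF
  rw [← hz, hFmin] at hmono
  simp only [ContinuousLinearMap.zero_apply, zero_sub] at hmono
  -- relate fderiv F wG to the gradient of the difference
  have hgd : fderiv ℝ (fun u => F u - G u) wG = fderiv ℝ F wG - fderiv ℝ G wG :=
    fderiv_sub (hF wG) (hG wG)
  have hinner : ⟪gradient (fun u => F u - G u) wG, z⟫ = fderiv ℝ F wG z := by
    rw [gradient, InnerProductSpace.toDual_symm_apply, hgd]
    simp [hGmin]
  have hcs : -fderiv ℝ F wG z ≤ B * ‖z‖ := by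
    have h1 : -fderiv ℝ F wG z ≤ |⟪gradient (fun u => F u - G u) wG, z⟫| := by
      rw [hinner]
      exact (neg_le_abs _)
    have h2 : |⟪gradient (fun u => F u - G u) wG, z⟫| ≤
        ‖gradient (fun u => F u - G u) wG‖ * ‖z‖ := abs_real_inner_le_norm _ _
    have h3 : ‖gradient (fun u => F u - G u) wG‖ * ‖z‖ ≤ B * ‖z‖ :=
      mul_le_mul_of_nonneg_right (hB wG) (norm_nonneg _)
    linarith
  have hkey : lam * ‖z‖ ^ 2 ≤ B * ‖z‖ := le_trans hmono hcs
  have hB0 : 0 ≤ B := le_trans (norm_nonneg _) (hB wG)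
  rcases eq_or_lt_of_le (norm_nonneg z) with h0 | h0
  · rw [← h0]
    positivity
  · rw [le_div_iff₀ hlam]
    have := mul_le_mul_of_nonneg_right hkey (le_of_lt (inv_pos.mpr h0))
    calc ‖z‖ * lam = lam * ‖z‖ ^ 2 * ‖z‖⁻¹ := by field_simp
      _ ≤ B * ‖z‖ * ‖z‖⁻¹ := this
      _ = B := by field_simp
end
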